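/- Let ξ ∈ V* be nonzero and define the divided difference operator Δ_ξ on the polynomial algebra S(V_ℂ) (polynomials on V*) by Δ_ξ(p) = (s_ξ(p) − p)/ξ^∨, where s_ξ is the algebra automorphism induced by the reflection. Let (p, f) = (p(∂)f)(0) be the pairing of S(V_ℂ) with analytic functions on V, where p(∂) is the constant-coefficient differential operator associated to p. Then for all p ∈ S(V_ℂ) and f real-analytic, (Δ_ξ(p), f) = −(p, I(ξ)f), where (I(ξ)f)(v) = ∫_0^{ξ(v)} f(v − t·ξ^∨) dt. -/

import Mathlib

open MvPolynomial intervalIntegral Set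
open scoped RealInnerProductSpace

noncomputable section GutkinAux

variable {n : ℕ}
local notation "V" => EuclideanSpace ℝ (Fin n)

def Sm (f : EuclideanSpace ℝ (Fin n) → ℂ) : Prop := ∀ k : ℕ, ContDiff ℝ k f

variable (ξ : EuclideanSpace ℝ (Fin n))

def uu : V := (2 / ‖ξ‖ ^ 2) • ξ

def Sf : V → V := fun v => v - ⟪ξ, v⟫ • uu ξ

def Sclm : V →L[ℝ] V :=
  ContinuousLinearMap.id ℝ (EuclideanSpace ℝ (Fin n)) - (innerSL ℝ ξ).smulRight (uu ξ)

def Iop (ψ : V → ℂ) : V → ℂ :=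
  fun v => ∫ t in (0:ℝ)..(⟪ξ, v⟫), ψ (v - t • uu ξ)

def Good (h : V → ℂ) : Prop :=
  ∃ φ ψ, Sm φ ∧ Sm ψ ∧ ∀ v, h v = φ v + Iop ξ ψ v

lemma hasFDerivAt_primitive (ψ : V → ℂ) (hψ : ContDiff ℝ 1 ψ) (u : V) (v₀ : V) (b₀ : ℝ) :
    HasFDerivAt (fun p : (EuclideanSpace ℝ (Fin n)) × ℝ => ∫ t in (0:ℝ)..p.2, ψ (p.1 - t • u))
      ((∫ t in (0:ℝ)..b₀,
          (fderiv ℝ ψ (v₀ - t • u)).comp (ContinuousLinearMap.fst ℝ (EuclideanSpace ℝ (Fin n)) ℝ))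
        + (ContinuousLinearMap.snd ℝ (EuclideanSpace ℝ (Fin n)) ℝ).smulRight (ψ (v₀ - b₀ • u)))
      (v₀, b₀) := by
  have hψc : Continuous ψ := hψ.continuous
  have hdc : Continuous (fderiv ℝ ψ) := hψ.continuous_fderiv one_ne_zero
  have hdiffψ : Differentiable ℝ ψ := hψ.differentiable one_ne_zero
  have hInt : ∀ (v : V) (a b : ℝ),
      IntervalIntegrable (fun t => ψ (v - t • u)) MeasureTheory.volume a b := fun v a b =>
    (hψc.comp (continuous_const.sub (continuous_id.smul continuous_const))).intervalIntegrable a b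
  -- Part A : fixed endpoint, differentiate under the integral sign
  obtain ⟨M, hM⟩ : ∃ M, ∀ x ∈ (Metric.closedBall v₀ 1 ×ˢ uIcc (0:ℝ) b₀),
      ‖fderiv ℝ ψ (x.1 - x.2 • u)‖ ≤ M := by
    have hK : IsCompact (Metric.closedBall v₀ 1 ×ˢ uIcc (0:ℝ) b₀) :=
      (isCompact_closedBall _ _).prod isCompact_uIcc
    exact hK.exists_bound_of_continuousOn
      ((hdc.comp (continuous_fst.sub (continuous_snd.smul continuous_const))).continuousOn)
  have hA : HasFDerivAt (fun p : V × ℝ => ∫ t in (0:ℝ)..b₀, ψ (p.1 - t • u))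
      (∫ t in (0:ℝ)..b₀,
        (fderiv ℝ ψ (v₀ - t • u)).comp (ContinuousLinearMap.fst ℝ (EuclideanSpace ℝ (Fin n)) ℝ))
      (v₀, b₀) := by
    apply intervalIntegral.hasFDerivAt_integral_of_dominated_of_fderiv_le
      (F := fun (p : V × ℝ) t => ψ (p.1 - t • u))
      (F' := fun (p : V × ℝ) t => (fderiv ℝ ψ (p.1 - t • u)).comp
        (ContinuousLinearMap.fst ℝ (EuclideanSpace ℝ (Fin n)) ℝ))
      (x₀ := ((v₀, b₀) : (EuclideanSpace ℝ (Fin n)) × ℝ)) (bound := fun _ => M) (Metric.ball_mem_nhds _ one_pos)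
    · filter_upwards with p
      exact ((hψc.comp (continuous_const.sub (continuous_id.smul
        continuous_const))).aestronglyMeasurable).restrict
    · exact hInt v₀ 0 b₀
    · exact (((hdc.comp (continuous_const.sub (continuous_id.smul
        continuous_const))).clm_comp continuous_const).aestronglyMeasurable).restrict
    · filter_upwards with t ht p hp
      have h1 : ‖p.1 - v₀‖ ≤ 1 := by
        have := Metric.mem_ball.1 hp
        rw [Prod.dist_eq] at this
        have := le_max_left (dist p.1 v₀) (dist p.2 b₀)
        rw [← dist_eq_norm]
        linarith [Metric.mem_ball.1 hp]
      have hmem : ((p.1, t) : V × ℝ) ∈ Metric.closedBall v₀ 1 ×ˢ uIcc (0:ℝ) b₀ := by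
        constructor
        · simpa [Metric.mem_closedBall, dist_eq_norm] using h1
        · exact Ioc_subset_Icc_self ht
      calc ‖(fderiv ℝ ψ (p.1 - t • u)).comp
            (ContinuousLinearMap.fst ℝ (EuclideanSpace ℝ (Fin n)) ℝ)‖
          ≤ ‖fderiv ℝ ψ (p.1 - t • u)‖ * ‖(ContinuousLinearMap.fst ℝ (EuclideanSpace ℝ (Fin n)) ℝ)‖ :=
            ContinuousLinearMap.opNorm_comp_le _ _
        _ ≤ ‖fderiv ℝ ψ (p.1 - t • u)‖ * 1 := by
            gcongr
            exact ContinuousLinearMap.norm_fst_le _ _ _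
        _ ≤ M := by simpa using hM _ hmem
    · exact intervalIntegrable_const
    · filter_upwards with t ht p hp
      exact ((hdiffψ _).hasFDerivAt).comp p ((hasFDerivAt_fst).sub_const (t • u))
  -- Part B : variable endpoint
  have hB : HasFDerivAt (fun p : V × ℝ => ∫ t in b₀..p.2, ψ (p.1 - t • u))
      ((ContinuousLinearMap.snd ℝ (EuclideanSpace ℝ (Fin n)) ℝ).smulRight (ψ (v₀ - b₀ • u)))
      (v₀, b₀) := by
    rw [hasFDerivAt_iff_isLittleO_nhds_zero, Asymptotics.isLittleO_iff]
    intro c hc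
    have hcont2 : ContinuousAt
        (fun q : (EuclideanSpace ℝ (Fin n)) × ℝ => ψ (v₀ + q.1 - q.2 • u)) (0, b₀) :=
      (hψc.comp ((continuous_const.add continuous_fst).sub
        (continuous_snd.smul continuous_const))).continuousAt
    rw [Metric.continuousAt_iff] at hcont2
    obtain ⟨δ, hδpos, hδ⟩ := hcont2 c hc
    filter_upwards [Metric.ball_mem_nhds (0 : V × ℝ) hδpos] with h hh
    obtain ⟨w, db⟩ := h
    have hn : ‖(w, db)‖ < δ := by simpa using mem_ball_zero_iff.1 hh
    have hw : ‖w‖ < δ := lt_of_le_of_lt (norm_fst_le (w, db)) hn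
    have hdb : |db| < δ := lt_of_le_of_lt (norm_snd_le (w, db)) hn
    -- pointwise bound on the integrand
    have hbnd : ∀ t ∈ Set.uIoc b₀ (b₀ + db), ‖ψ (v₀ + w - t • u) - ψ (v₀ - b₀ • u)‖ ≤ c := by
      intro t ht
      have htb : |t - b₀| ≤ |db| := by
        rw [Set.mem_uIoc] at ht
        have h1 := le_abs_self db
        have h2 := neg_abs_le db
        rw [abs_sub_le_iff]
        rcases ht with ⟨ha, hb⟩ | ⟨ha, hb⟩ <;> constructor <;> linarith
      have hdq : dist ((w, t) : V × ℝ) ((0 : V), b₀) < δ := by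
        rw [Prod.dist_eq]
        apply max_lt
        · simpa [dist_eq_norm] using hw
        · rw [Real.dist_eq]
          exact lt_of_le_of_lt htb hdb
      have := hδ hdq
      simp only [add_zero] at this
      rw [dist_eq_norm] at this
      exact this.le
    -- compute the expression
    have hsplit : (∫ t in b₀..(b₀ + db), ψ ((v₀ + w) - t • u))
        - db • ψ (v₀ - b₀ • u)
        = ∫ t in b₀..(b₀ + db), (ψ (v₀ + w - t • u) - ψ (v₀ - b₀ • u)) := by
      rw [intervalIntegral.integral_sub (hInt (v₀ + w) _ _) intervalIntegrable_const,
        intervalIntegral.integral_const]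
      ring_nf
    have key : ‖(∫ t in b₀..(b₀ + db), ψ ((v₀ + w) - t • u)) - db • ψ (v₀ - b₀ • u)‖
        ≤ c * ‖((w, db) : V × ℝ)‖ := by
      rw [hsplit]
      calc ‖∫ t in b₀..(b₀ + db), (ψ (v₀ + w - t • u) - ψ (v₀ - b₀ • u))‖
          ≤ c * |b₀ + db - b₀| :=
            intervalIntegral.norm_integral_le_of_norm_le_const hbnd
        _ = c * |db| := by ring_nf
        _ ≤ c * ‖((w, db) : V × ℝ)‖ := by
            gcongr
            exact norm_snd_le ((w, db) : V × ℝ)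
    simpa [intervalIntegral.integral_same] using key
  have heq : (fun p : V × ℝ => ∫ t in (0:ℝ)..p.2, ψ (p.1 - t • u))
      = fun p : V × ℝ => (∫ t in (0:ℝ)..b₀, ψ (p.1 - t • u)) + ∫ t in b₀..p.2, ψ (p.1 - t • u) :=
    funext fun p => (integral_add_adjacent_intervals (hInt p.1 0 b₀) (hInt p.1 b₀ p.2)).symm
  rw [heq]
  exact hA.add hB


lemma hasFDerivAt_Iop (ψ : V → ℂ) (hψ : ContDiff ℝ 1 ψ) (v : V) :
    HasFDerivAt (Iop ξ ψ)
      ((∫ t in (0:ℝ)..(⟪ξ, v⟫), fderiv ℝ ψ (v - t • uu ξ))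
        + (innerSL ℝ ξ).smulRight (ψ (Sf ξ v))) v := by
  have hdc : Continuous (fderiv ℝ ψ) := hψ.continuous_fderiv one_ne_zero
  have hIntD : ∀ a b : ℝ, IntervalIntegrable
      (fun t => fderiv ℝ ψ (v - t • uu ξ)) MeasureTheory.volume a b := fun a b =>
    (hdc.comp (continuous_const.sub (continuous_id.smul continuous_const))).intervalIntegrable a b
  have hIntD' : ∀ a b : ℝ, IntervalIntegrable
      (fun t => (fderiv ℝ ψ (v - t • uu ξ)).comp
        (ContinuousLinearMap.fst ℝ (EuclideanSpace ℝ (Fin n)) ℝ)) MeasureTheory.volume a b :=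
    fun a b => (((hdc.comp (continuous_const.sub (continuous_id.smul
      continuous_const))).clm_comp continuous_const)).intervalIntegrable a b
  have hj : HasFDerivAt (fun w : V => ((w, ⟪ξ, w⟫) : V × ℝ))
      ((ContinuousLinearMap.id ℝ (EuclideanSpace ℝ (Fin n))).prod (innerSL ℝ ξ)) v :=
    ((ContinuousLinearMap.id ℝ (EuclideanSpace ℝ (Fin n))).prod (innerSL ℝ ξ)).hasFDerivAt
  have hcomp := (hasFDerivAt_primitive ψ hψ (uu ξ) v (⟪ξ, v⟫)).comp v hj
  have heq : ((∫ t in (0:ℝ)..(⟪ξ, v⟫),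
        (fderiv ℝ ψ (v - t • uu ξ)).comp (ContinuousLinearMap.fst ℝ (EuclideanSpace ℝ (Fin n)) ℝ))
        + (ContinuousLinearMap.snd ℝ (EuclideanSpace ℝ (Fin n)) ℝ).smulRight
            (ψ (v - (⟪ξ, v⟫) • uu ξ))).comp
          ((ContinuousLinearMap.id ℝ (EuclideanSpace ℝ (Fin n))).prod (innerSL ℝ ξ))
      = (∫ t in (0:ℝ)..(⟪ξ, v⟫), fderiv ℝ ψ (v - t • uu ξ))
        + (innerSL ℝ ξ).smulRight (ψ (Sf ξ v)) := by
    apply ContinuousLinearMap.ext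
    intro w
    simp only [ContinuousLinearMap.comp_apply, ContinuousLinearMap.add_apply,
      ContinuousLinearMap.prod_apply, ContinuousLinearMap.id_apply,
      ContinuousLinearMap.smulRight_apply, ContinuousLinearMap.coe_snd']
    rw [ContinuousLinearMap.intervalIntegral_apply (hIntD' 0 (⟪ξ, v⟫)),
      ContinuousLinearMap.intervalIntegral_apply (hIntD 0 (⟪ξ, v⟫))]
    simp [Sf]
  rw [heq] at hcomp
  exact hcomp


variable {ξ}

lemma Sm.contDiff1 {f : V → ℂ} (hf : Sm f) : ContDiff ℝ 1 f := by simpa using hf 1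

lemma Sm.cont {f : V → ℂ} (hf : Sm f) : Continuous f := hf.contDiff1.continuous

lemma Sm.zero : Sm (fun _ : V => (0:ℂ)) := fun _ => contDiff_const

lemma Sm.add {f g : V → ℂ} (hf : Sm f) (hg : Sm g) : Sm (fun x => f x + g x) :=
  fun k => (hf k).add (hg k)

lemma Sm.cmul {f : V → ℂ} (hf : Sm f) (a : ℂ) : Sm (fun x => a * f x) :=
  fun k => contDiff_const.mul (hf k)

lemma Sm.rsmul {f : V → ℂ} (hf : Sm f) (a : ℝ) : Sm (fun x => a • f x) :=
  fun k => (hf k).const_smul a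

lemma Sm.neg {f : V → ℂ} (hf : Sm f) : Sm (fun x => -(f x)) := fun k => (hf k).neg

lemma Sm.fderiv_apply {f : V → ℂ} (hf : Sm f) (w : V) :
    Sm fun x => fderiv ℝ f x w := by
  intro k
  exact ((hf (k+1)).fderiv_right (by norm_cast)).clm_apply contDiff_const

lemma contDiff_Sf (k : ℕ) : ContDiff ℝ k (Sf ξ) := by
  apply contDiff_id.sub
  exact (contDiff_const.inner (𝕜 := ℝ) contDiff_id).smul contDiff_const

lemma Sm.compSf {f : V → ℂ} (hf : Sm f) : Sm (fun v => f (Sf ξ v)) :=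
  fun k => (hf k).comp (contDiff_Sf k)

lemma inner_uu (hξ : ξ ≠ 0) : ⟪ξ, uu ξ⟫ = 2 := by
  rw [uu, real_inner_smul_right, real_inner_self_eq_norm_sq]
  have : ‖ξ‖ ≠ 0 := norm_ne_zero_iff.2 hξ
  field_simp

lemma inner_Sf (hξ : ξ ≠ 0) (v : V) : ⟪ξ, Sf ξ v⟫ = -⟪ξ, v⟫ := by
  rw [Sf, inner_sub_right, real_inner_smul_right, inner_uu hξ]
  ring

lemma Sf_zero : Sf ξ (0 : V) = 0 := by simp [Sf]

lemma Iop_intable {ψ : V → ℂ} (hψ : Continuous ψ) (v : V) (a b : ℝ) :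
    IntervalIntegrable (fun t => ψ (v - t • uu ξ)) MeasureTheory.volume a b :=
  (hψ.comp (continuous_const.sub (continuous_id.smul continuous_const))).intervalIntegrable a b

lemma Iop_compSf (hξ : ξ ≠ 0) (ψ : V → ℂ) (v : V) :
    Iop ξ ψ (Sf ξ v) = - Iop ξ ψ v := by
  have harg : ∀ t : ℝ, Sf ξ v - t • uu ξ = v - (t + ⟪ξ, v⟫) • uu ξ := by
    intro t
    rw [Sf, add_smul]
    abel
  have key := intervalIntegral.integral_comp_add_right (a := (0:ℝ)) (b := -⟪ξ, v⟫)
    (fun s => ψ (v - s • uu ξ)) ⟪ξ, v⟫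
  simp only [zero_add, neg_add_cancel] at key
  rw [Iop, inner_Sf hξ]
  simp only [harg]
  rw [key, Iop, intervalIntegral.integral_symm]

lemma Iop_neg (ψ : V → ℂ) (v : V) : Iop ξ (fun y => -(ψ y)) v = - Iop ξ ψ v := by
  rw [Iop, Iop, ← intervalIntegral.integral_neg]

lemma Iop_cmul (ψ : V → ℂ) (a : ℂ) (v : V) :
    Iop ξ (fun y => a * ψ y) v = a * Iop ξ ψ v := by
  rw [Iop, Iop, ← intervalIntegral.integral_const_mul]

lemma Iop_add {ψ₁ ψ₂ : V → ℂ} (h₁ : Continuous ψ₁) (h₂ : Continuous ψ₂) (v : V) :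
    Iop ξ (fun y => ψ₁ y + ψ₂ y) v = Iop ξ ψ₁ v + Iop ξ ψ₂ v := by
  rw [Iop, Iop, Iop, ← intervalIntegral.integral_add (Iop_intable h₁ v _ _) (Iop_intable h₂ v _ _)]

-- Good lemmas
lemma Good.ofSm {φ : V → ℂ} (hφ : Sm φ) : Good ξ φ :=
  ⟨φ, fun _ => 0, hφ, Sm.zero, fun v => by simp [Iop]⟩

lemma Good.zero : Good ξ (fun _ => (0:ℂ)) := Good.ofSm Sm.zero

lemma Good.diff {h : V → ℂ} (hh : Good ξ h) : Differentiable ℝ h := by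
  obtain ⟨φ, ψ, hφ, hψ, hrep⟩ := hh
  have : h = fun v => φ v + Iop ξ ψ v := funext hrep
  rw [this]
  exact fun v => DifferentiableAt.add ((hφ.contDiff1.differentiable one_ne_zero) v)
    ((hasFDerivAt_Iop ξ ψ hψ.contDiff1 v).differentiableAt)

lemma Iop_deriv (ψ : V → ℂ) (hψ : Sm ψ) (v : V) (j : Fin n) :
    fderiv ℝ (Iop ξ ψ) v (EuclideanSpace.single j 1)
      = ξ j • ψ (Sf ξ v)
        + Iop ξ (fun y => fderiv ℝ ψ y (EuclideanSpace.single j 1)) v := by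
  rw [(hasFDerivAt_Iop ξ ψ hψ.contDiff1 v).fderiv]
  have hIntD : IntervalIntegrable (fun t => fderiv ℝ ψ (v - t • uu ξ))
      MeasureTheory.volume 0 (⟪ξ, v⟫) :=
    ((hψ.contDiff1.continuous_fderiv one_ne_zero).comp
      (continuous_const.sub (continuous_id.smul continuous_const))).intervalIntegrable _ _
  rw [ContinuousLinearMap.add_apply, ContinuousLinearMap.intervalIntegral_apply hIntD]
  rw [ContinuousLinearMap.smulRight_apply, innerSL_apply_apply]
  rw [Iop]
  have : ⟪ξ, EuclideanSpace.single j (1:ℝ)⟫ = ξ j := by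
    simp [EuclideanSpace.inner_single_right]
  rw [this, add_comm]

lemma Good.deriv {h : V → ℂ} (hh : Good ξ h) (j : Fin n) :
    Good ξ (fun x => fderiv ℝ h x (EuclideanSpace.single j 1)) := by
  obtain ⟨φ, ψ, hφ, hψ, hrep⟩ := hh
  have hrep' : h = fun v => φ v + Iop ξ ψ v := funext hrep
  refine ⟨fun v => fderiv ℝ φ v (EuclideanSpace.single j 1) + ξ j • ψ (Sf ξ v),
    fun y => fderiv ℝ ψ y (EuclideanSpace.single j 1),
    (hφ.fderiv_apply _).add ((hψ.compSf).rsmul _), hψ.fderiv_apply _, ?_⟩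
  intro v
  have hd := fderiv_fun_add (𝕜 := ℝ) (x := v) ((hφ.contDiff1.differentiable one_ne_zero) v)
    ((hasFDerivAt_Iop ξ ψ hψ.contDiff1 v).differentiableAt)
  simp only [hrep', hd, ContinuousLinearMap.add_apply, Iop_deriv ψ hψ v j]
  ring

lemma Good.add {h₁ h₂ : V → ℂ} (hh₁ : Good ξ h₁) (hh₂ : Good ξ h₂) :
    Good ξ (fun x => h₁ x + h₂ x) := by
  obtain ⟨φ₁, ψ₁, hφ₁, hψ₁, hr₁⟩ := hh₁
  obtain ⟨φ₂, ψ₂, hφ₂, hψ₂, hr₂⟩ := hh₂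
  refine ⟨fun v => φ₁ v + φ₂ v, fun y => ψ₁ y + ψ₂ y, hφ₁.add hφ₂, hψ₁.add hψ₂, fun v => ?_⟩
  simp only [hr₁, hr₂, Iop_add hψ₁.cont hψ₂.cont]
  ring

lemma Good.cmul {h : V → ℂ} (hh : Good ξ h) (a : ℂ) : Good ξ (fun x => a * h x) := by
  obtain ⟨φ, ψ, hφ, hψ, hr⟩ := hh
  refine ⟨fun v => a * φ v, fun y => a * ψ y, hφ.cmul a, hψ.cmul a, fun v => ?_⟩
  simp only [hr, Iop_cmul]
  ring

lemma Good.compSf (hξ : ξ ≠ 0) {h : V → ℂ} (hh : Good ξ h) : Good ξ (fun v => h (Sf ξ v)) := by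
  obtain ⟨φ, ψ, hφ, hψ, hr⟩ := hh
  refine ⟨fun v => φ (Sf ξ v), fun y => -(ψ y), hφ.compSf, hψ.neg, fun v => ?_⟩
  simp only [hr, Iop_compSf hξ, Iop_neg]


variable (ξ)

-- decomposition of uu in coordinates
lemma uu_decomp : uu ξ = ∑ j, ((2 / ‖ξ‖ ^ 2) * ξ j) • EuclideanSpace.single j (1:ℝ) := by
  have h := (EuclideanSpace.basisFun (Fin n) ℝ).sum_repr ξ
  simp only [EuclideanSpace.basisFun_apply, EuclideanSpace.basisFun_repr] at h
  calc uu ξ = (2 / ‖ξ‖ ^ 2) • ∑ j, ξ j • EuclideanSpace.single j (1:ℝ) := by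
        rw [uu]; congr 1; exact h.symm
    _ = ∑ j, ((2 / ‖ξ‖ ^ 2) * ξ j) • EuclideanSpace.single j (1:ℝ) := by
        rw [Finset.smul_sum]
        exact Finset.sum_congr rfl fun j _ => (smul_smul _ _ _)

lemma fderiv_apply_uu (h : V → ℂ) (v : V) :
    fderiv ℝ h v (uu ξ)
      = ∑ j, (((2 / ‖ξ‖ ^ 2) * ξ j : ℝ) : ℂ) * fderiv ℝ h v (EuclideanSpace.single j 1) := by
  conv_lhs => rw [uu_decomp, map_sum]
  refine Finset.sum_congr rfl fun j _ => ?_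
  rw [map_smul, Complex.real_smul]

lemma hasFDerivAt_Sf (v : V) : HasFDerivAt (Sf ξ) (Sclm ξ) v := by
  have heq : (fun w : V => ⟪ξ, w⟫ • uu ξ) = ⇑((innerSL ℝ ξ).smulRight (uu ξ)) := by
    funext w
    simp [ContinuousLinearMap.smulRight_apply, innerSL_apply_apply]
  have h1 : HasFDerivAt (fun w : V => ⟪ξ, w⟫ • uu ξ) ((innerSL ℝ ξ).smulRight (uu ξ)) v := by
    rw [heq]; exact ((innerSL ℝ ξ).smulRight (uu ξ)).hasFDerivAt
  exact (hasFDerivAt_id v).sub h1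

lemma Sclm_single (i : Fin n) :
    Sclm ξ (EuclideanSpace.single i (1:ℝ)) = EuclideanSpace.single i (1:ℝ) - (ξ i) • uu ξ := by
  simp [Sclm, ContinuousLinearMap.smulRight_apply, innerSL_apply_apply,
    EuclideanSpace.inner_single_right]

lemma deriv_compSf {h : V → ℂ} (hh : Good ξ h) (i : Fin n) (v : V) :
    fderiv ℝ (fun w => h (Sf ξ w)) v (EuclideanSpace.single i 1)
      = fderiv ℝ h (Sf ξ v) (EuclideanSpace.single i 1)
        - ∑ j, (((2 / ‖ξ‖ ^ 2) * (ξ i * ξ j) : ℝ) : ℂ)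
            * fderiv ℝ h (Sf ξ v) (EuclideanSpace.single j 1) := by
  have hc := ((hh.diff (Sf ξ v)).hasFDerivAt.comp v (hasFDerivAt_Sf ξ v)).fderiv
  rw [show (fun w => h (Sf ξ w)) = h ∘ Sf ξ from rfl, hc]
  rw [ContinuousLinearMap.comp_apply, Sclm_single, map_sub, map_smul, fderiv_apply_uu]
  rw [Finset.smul_sum]
  congr 1
  refine Finset.sum_congr rfl fun j _ => ?_
  rw [Complex.real_smul]
  push_cast
  ring


end GutkinAux

noncomputable section PairLayer

variable {n : ℕ}

variable (pair : MvPolynomial (Fin n) ℂ → (EuclideanSpace ℝ (Fin n) → ℂ) → ℂ)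

lemma pair_zero (hpair_smul : ∀ (c : ℂ) (p) (f), pair (c • p) f = c * pair p f) (f) :
    pair 0 f = 0 := by
  simpa using hpair_smul 0 0 f

lemma pair_C (hpair_one : ∀ f, pair 1 f = f 0)
    (hpair_smul : ∀ (c : ℂ) (p) (f), pair (c • p) f = c * pair p f) (a : ℂ) (f) :
    pair (C a) f = a * f 0 := by
  have h1 : (C a : MvPolynomial (Fin n) ℂ) = a • 1 := by
    rw [smul_eq_C_mul, mul_one]
  rw [h1, hpair_smul, hpair_one]

lemma pair_sub (hpair_add : ∀ p q f, pair (p + q) f = pair p f + pair q f)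
    (hpair_smul : ∀ (c : ℂ) (p) (f), pair (c • p) f = c * pair p f)
    (p q : MvPolynomial (Fin n) ℂ) (f) :
    pair (p - q) f = pair p f - pair q f := by
  have h1 : p - q = p + (-1 : ℂ) • q := by
    rw [neg_one_smul, ← sub_eq_add_neg]
  rw [h1, hpair_add, hpair_smul]
  ring

lemma pair_sum_left (hpair_add : ∀ p q f, pair (p + q) f = pair p f + pair q f)
    (hpair_smul : ∀ (c : ℂ) (p) (f), pair (c • p) f = c * pair p f)
    {ι : Type*} (t : Finset ι) (P : ι → MvPolynomial (Fin n) ℂ) (f) :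
    pair (∑ j ∈ t, P j) f = ∑ j ∈ t, pair (P j) f := by
  classical
  induction t using Finset.induction with
  | empty => simpa using pair_zero pair hpair_smul f
  | insert _ _ hj ih =>
    rw [Finset.sum_insert hj, Finset.sum_insert hj, hpair_add, ih]

theorem pair_good_sum (ξ : EuclideanSpace ℝ (Fin n))
    (hpair_one : ∀ f, pair 1 f = f 0)
    (hpair_add : ∀ p q f, pair (p + q) f = pair p f + pair q f)
    (hpair_smul : ∀ (c : ℂ) (p) (f), pair (c • p) f = c * pair p f)
    (hpair_X : ∀ (i : Fin n) (p) (f : EuclideanSpace ℝ (Fin n) → ℂ),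
      pair (X i * p) f = pair p (fun x => fderiv ℝ f x (EuclideanSpace.single i 1)))
    (p : MvPolynomial (Fin n) ℂ) {ι : Type} (t : Finset ι) (c : ι → ℂ)
    (H : ι → EuclideanSpace ℝ (Fin n) → ℂ) (hH : ∀ j ∈ t, Good ξ (H j)) :
    pair p (fun v => ∑ j ∈ t, c j * H j v) = ∑ j ∈ t, c j * pair p (H j) := by
  induction p using MvPolynomial.induction_on generalizing H with
  | C a =>
    rw [pair_C pair hpair_one hpair_smul, Finset.mul_sum]
    exact Finset.sum_congr rfl fun j _ => by
      rw [pair_C pair hpair_one hpair_smul]; ring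
  | add p q hp hq =>
    rw [hpair_add, hp H hH, hq H hH, ← Finset.sum_add_distrib]
    exact Finset.sum_congr rfl fun j _ => by rw [hpair_add]; ring
  | mul_X p i hp =>
    rw [mul_comm p (X i), hpair_X]
    have hdsum : (fun v => fderiv ℝ (fun w => ∑ j ∈ t, c j * H j w) v (EuclideanSpace.single i 1))
        = fun v => ∑ j ∈ t, c j * fderiv ℝ (H j) v (EuclideanSpace.single i 1) := by
      funext v
      rw [fderiv_fun_sum (fun j hj => ((hH j hj).diff v).const_mul (c j))]
      rw [ContinuousLinearMap.sum_apply]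
      exact Finset.sum_congr rfl fun j hj => by
        rw [fderiv_const_mul ((hH j hj).diff v), ContinuousLinearMap.smul_apply, smul_eq_mul]
    rw [hdsum, hp (fun j => fun v => fderiv ℝ (H j) v (EuclideanSpace.single i 1))
      (fun j hj => (hH j hj).deriv i)]
    exact Finset.sum_congr rfl fun j hj => by rw [hpair_X i p (H j)]

end PairLayer

section PairLayer2

variable {n : ℕ}
variable (pair : MvPolynomial (Fin n) ℂ → (EuclideanSpace ℝ (Fin n) → ℂ) → ℂ)
variable (ξ : EuclideanSpace ℝ (Fin n))
variable (hpair_one : ∀ f, pair 1 f = f 0)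
variable (hpair_add : ∀ p q f, pair (p + q) f = pair p f + pair q f)
variable (hpair_smul : ∀ (c : ℂ) (p) (f), pair (c • p) f = c * pair p f)
variable (hpair_X : ∀ (i : Fin n) (p) (f : EuclideanSpace ℝ (Fin n) → ℂ),
      pair (X i * p) f = pair p (fun x => fderiv ℝ f x (EuclideanSpace.single i 1)))

include hpair_one hpair_add hpair_smul hpair_X

lemma pair_good_cmul (p : MvPolynomial (Fin n) ℂ) (a : ℂ)
    {h : EuclideanSpace ℝ (Fin n) → ℂ} (hh : Good ξ h) :
    pair p (fun v => a * h v) = a * pair p h := by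
  have := pair_good_sum pair ξ hpair_one hpair_add hpair_smul hpair_X p
    ({0} : Finset (Fin 1)) (fun _ => a) (fun _ => h) (fun _ _ => hh)
  simpa using this

lemma pair_good_add (p : MvPolynomial (Fin n) ℂ)
    {h₁ h₂ : EuclideanSpace ℝ (Fin n) → ℂ} (hh₁ : Good ξ h₁) (hh₂ : Good ξ h₂) :
    pair p (fun v => h₁ v + h₂ v) = pair p h₁ + pair p h₂ := by
  have := pair_good_sum pair ξ hpair_one hpair_add hpair_smul hpair_X p
    (Finset.univ : Finset (Fin 2)) (fun _ => 1) (fun j => if j = 0 then h₁ else h₂)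
    (fun j _ => by by_cases hj : j = 0 <;> simp [hj, hh₁, hh₂])
  simpa [Fin.sum_univ_two] using this

lemma pair_good_sub (p : MvPolynomial (Fin n) ℂ)
    {h₁ h₂ : EuclideanSpace ℝ (Fin n) → ℂ} (hh₁ : Good ξ h₁) (hh₂ : Good ξ h₂) :
    pair p (fun v => h₁ v - h₂ v) = pair p h₁ - pair p h₂ := by
  have hneg : pair p (fun v => (-1:ℂ) * h₂ v) = (-1) * pair p h₂ :=
    pair_good_cmul pair ξ hpair_one hpair_add hpair_smul hpair_X p (-1) hh₂
  have hadd := pair_good_add pair ξ hpair_one hpair_add hpair_smul hpair_X p hh₁ (hh₂.cmul (-1))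
  calc pair p (fun v => h₁ v - h₂ v)
      = pair p (fun v => h₁ v + (fun x => (-1:ℂ) * h₂ x) v) := by
        congr 1; funext v; simp; ring
    _ = pair p h₁ + (-1) * pair p h₂ := by rw [hadd, hneg]
    _ = pair p h₁ - pair p h₂ := by ring

theorem pair_sigma (hξ : ξ ≠ 0)
    (σ : MvPolynomial (Fin n) ℂ →ₐ[ℂ] MvPolynomial (Fin n) ℂ)
    (hσ : ∀ i, σ (X i) =
      X i - ∑ j, (((2 / ‖ξ‖ ^ 2) * (ξ i * ξ j) : ℝ) : ℂ) • X j)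
    (p : MvPolynomial (Fin n) ℂ) {h : EuclideanSpace ℝ (Fin n) → ℂ} (hh : Good ξ h) :
    pair (σ p) h = pair p (fun v => h (Sf ξ v)) := by
  induction p using MvPolynomial.induction_on generalizing h with
  | C a =>
    have hCa : σ (C a) = C a := by
      have := σ.commutes a
      simpa [MvPolynomial.algebraMap_eq] using this
    rw [hCa, pair_C pair hpair_one hpair_smul, pair_C pair hpair_one hpair_smul]
    have : Sf ξ (0 : EuclideanSpace ℝ (Fin n)) = 0 := by simp [Sf]
    rw [this]
  | add p q hp hq =>
    rw [map_add, hpair_add, hpair_add, hp hh, hq hh]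
  | mul_X p i hp =>
    rw [map_mul, hσ i, mul_comm (σ p), sub_mul, Finset.sum_mul,
      pair_sub pair hpair_add hpair_smul, pair_sum_left pair hpair_add hpair_smul]
    have hL : ∀ j, pair ((((2 / ‖ξ‖ ^ 2) * (ξ i * ξ j) : ℝ) : ℂ) • X j * σ p) h
        = (((2 / ‖ξ‖ ^ 2) * (ξ i * ξ j) : ℝ) : ℂ)
          * pair p (fun w => fderiv ℝ h (Sf ξ w) (EuclideanSpace.single j 1)) := by
      intro j
      rw [smul_mul_assoc, hpair_smul, hpair_X, hp (hh.deriv j)]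
    simp only [hL]
    rw [hpair_X, hp (hh.deriv i)]
    rw [mul_comm p (X i), hpair_X]
    have hps : (fun x => fderiv ℝ (fun v => h (Sf ξ v)) x (EuclideanSpace.single i 1))
        = fun v => (fun w => fderiv ℝ h (Sf ξ w) (EuclideanSpace.single i 1)) v
          - (fun w => ∑ j, (((2 / ‖ξ‖ ^ 2) * (ξ i * ξ j) : ℝ) : ℂ)
              * fderiv ℝ h (Sf ξ w) (EuclideanSpace.single j 1)) v := by
      funext v
      exact deriv_compSf ξ hh i v
    rw [hps, pair_good_sub pair ξ hpair_one hpair_add hpair_smul hpair_X p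
      (Good.compSf hξ (hh.deriv i))
      (by
        have : Good ξ (fun w => ∑ j, (((2 / ‖ξ‖ ^ 2) * (ξ i * ξ j) : ℝ) : ℂ)
            * fderiv ℝ h (Sf ξ w) (EuclideanSpace.single j 1)) := by
          classical
          induction (Finset.univ : Finset (Fin n)) using Finset.induction with
          | empty => simpa using (Good.zero (ξ := ξ))
          | insert _ _ hj ih =>
            simp only [Finset.sum_insert hj]
            exact Good.add ((Good.compSf hξ (hh.deriv _)).cmul _) ih
        exact this)]
    rw [pair_good_sum pair ξ hpair_one hpair_add hpair_smul hpair_X p Finset.univ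
      (fun j => (((2 / ‖ξ‖ ^ 2) * (ξ i * ξ j) : ℝ) : ℂ))
      (fun j => fun w => fderiv ℝ h (Sf ξ w) (EuclideanSpace.single j 1))
      (fun j _ => Good.compSf hξ (hh.deriv j))]

end PairLayer2

noncomputable section Algebra

variable {n : ℕ} (ξ : EuclideanSpace ℝ (Fin n))

lemma sum_sq (hξ : ξ ≠ 0) : ∑ j, ξ j * ξ j = ‖ξ‖ ^ 2 := by
  have h := real_inner_self_eq_norm_sq ξ
  rw [← h]
  rw [PiLp.inner_apply]
  simp [RCLike.inner_apply, pow_two]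

lemma sigma_sq (hξ : ξ ≠ 0)
    (σ : MvPolynomial (Fin n) ℂ →ₐ[ℂ] MvPolynomial (Fin n) ℂ)
    (hσ : ∀ i, σ (X i) =
      X i - ∑ j, (((2 / ‖ξ‖ ^ 2) * (ξ i * ξ j) : ℝ) : ℂ) • X j)
    (p : MvPolynomial (Fin n) ℂ) : σ (σ p) = p := by
  have hN : (‖ξ‖ : ℝ) ^ 2 ≠ 0 := pow_ne_zero _ (norm_ne_zero_iff.2 hξ)
  have key : σ.comp σ = AlgHom.id ℂ (MvPolynomial (Fin n) ℂ) := by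
    apply MvPolynomial.algHom_ext
    intro i
    rw [AlgHom.comp_apply, AlgHom.id_apply, hσ i, map_sub, hσ i, map_sum]
    have hsj : ∀ j, σ ((((2 / ‖ξ‖ ^ 2) * (ξ i * ξ j) : ℝ) : ℂ) • X j)
        = (((2 / ‖ξ‖ ^ 2) * (ξ i * ξ j) : ℝ) : ℂ) • X j
          - ∑ k, ((((2 / ‖ξ‖ ^ 2) * (ξ i * ξ j) : ℝ) : ℂ)
            * (((2 / ‖ξ‖ ^ 2) * (ξ j * ξ k) : ℝ) : ℂ)) • X k := by
      intro j
      rw [map_smul, hσ j, smul_sub, Finset.smul_sum]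
      simp only [smul_smul]
    simp only [hsj]
    rw [Finset.sum_sub_distrib, Finset.sum_comm]
    have hcoe : ∀ k, (∑ j, ((((2 / ‖ξ‖ ^ 2) * (ξ i * ξ j) : ℝ) : ℂ)
          * (((2 / ‖ξ‖ ^ 2) * (ξ j * ξ k) : ℝ) : ℂ)) • X k)
        = (2 * (((2 / ‖ξ‖ ^ 2) * (ξ i * ξ k) : ℝ) : ℂ)) • (X k : MvPolynomial (Fin n) ℂ) := by
      intro k
      rw [← Finset.sum_smul]
      congr 1
      have : ∑ j, ((((2 / ‖ξ‖ ^ 2) * (ξ i * ξ j) : ℝ) : ℂ)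
          * (((2 / ‖ξ‖ ^ 2) * (ξ j * ξ k) : ℝ) : ℂ))
          = (((∑ j, (2 / ‖ξ‖ ^ 2) * (ξ i * ξ j) * ((2 / ‖ξ‖ ^ 2) * (ξ j * ξ k))) : ℝ) : ℂ) := by
        push_cast
        rfl
      rw [this]
      have hr : (∑ j, (2 / ‖ξ‖ ^ 2) * (ξ i * ξ j) * ((2 / ‖ξ‖ ^ 2) * (ξ j * ξ k)))
          = 2 * ((2 / ‖ξ‖ ^ 2) * (ξ i * ξ k)) := by
        have : (∑ j, (2 / ‖ξ‖ ^ 2) * (ξ i * ξ j) * ((2 / ‖ξ‖ ^ 2) * (ξ j * ξ k)))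
            = (2 / ‖ξ‖ ^ 2) * (2 / ‖ξ‖ ^ 2) * (ξ i * ξ k) * (∑ j, ξ j * ξ j) := by
          rw [Finset.mul_sum]
          exact Finset.sum_congr rfl fun j _ => by ring
        rw [this, sum_sq ξ hξ]
        field_simp
      rw [hr]
      push_cast
      ring
    simp only [hcoe]
    have hB : (∑ x, (2 * (((2 / ‖ξ‖ ^ 2) * (ξ i * ξ x) : ℝ) : ℂ)) • (X x : MvPolynomial (Fin n) ℂ))
        = (2:ℂ) • ∑ x, (((2 / ‖ξ‖ ^ 2) * (ξ i * ξ x) : ℝ) : ℂ) • (X x : MvPolynomial (Fin n) ℂ) := by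
      rw [Finset.smul_sum]
      exact Finset.sum_congr rfl fun x _ => by rw [smul_smul]
    rw [hB]
    module
  calc σ (σ p) = (σ.comp σ) p := rfl
    _ = p := by rw [key]; rfl

end Algebra

noncomputable section Algebra2

variable {n : ℕ} (ξ : EuclideanSpace ℝ (Fin n))

lemma sigma_P (hξ : ξ ≠ 0)
    (σ : MvPolynomial (Fin n) ℂ →ₐ[ℂ] MvPolynomial (Fin n) ℂ)
    (hσ : ∀ i, σ (X i) =
      X i - ∑ j, (((2 / ‖ξ‖ ^ 2) * (ξ i * ξ j) : ℝ) : ℂ) • X j) :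
    σ (∑ j, (((2 / ‖ξ‖ ^ 2) * ξ j : ℝ) : ℂ) • X j)
      = -(∑ j, (((2 / ‖ξ‖ ^ 2) * ξ j : ℝ) : ℂ) • X j) := by
  have hN : (‖ξ‖ : ℝ) ^ 2 ≠ 0 := pow_ne_zero _ (norm_ne_zero_iff.2 hξ)
  rw [map_sum]
  have hsj : ∀ j, σ ((((2 / ‖ξ‖ ^ 2) * ξ j : ℝ) : ℂ) • X j)
      = (((2 / ‖ξ‖ ^ 2) * ξ j : ℝ) : ℂ) • X j
        - ∑ k, ((((2 / ‖ξ‖ ^ 2) * ξ j : ℝ) : ℂ)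
          * (((2 / ‖ξ‖ ^ 2) * (ξ j * ξ k) : ℝ) : ℂ)) • X k := by
    intro j
    rw [map_smul, hσ j, smul_sub, Finset.smul_sum]
    simp only [smul_smul]
  simp only [hsj]
  rw [Finset.sum_sub_distrib, Finset.sum_comm]
  have hcoe : ∀ k, (∑ j, ((((2 / ‖ξ‖ ^ 2) * ξ j : ℝ) : ℂ)
        * (((2 / ‖ξ‖ ^ 2) * (ξ j * ξ k) : ℝ) : ℂ)) • X k)
      = (2 * (((2 / ‖ξ‖ ^ 2) * ξ k : ℝ) : ℂ)) • (X k : MvPolynomial (Fin n) ℂ) := by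
    intro k
    rw [← Finset.sum_smul]
    congr 1
    have h1 : ∑ j, ((((2 / ‖ξ‖ ^ 2) * ξ j : ℝ) : ℂ)
        * (((2 / ‖ξ‖ ^ 2) * (ξ j * ξ k) : ℝ) : ℂ))
        = (((∑ j, (2 / ‖ξ‖ ^ 2) * ξ j * ((2 / ‖ξ‖ ^ 2) * (ξ j * ξ k))) : ℝ) : ℂ) := by
      push_cast
      rfl
    rw [h1]
    have hr : (∑ j, (2 / ‖ξ‖ ^ 2) * ξ j * ((2 / ‖ξ‖ ^ 2) * (ξ j * ξ k)))
        = 2 * ((2 / ‖ξ‖ ^ 2) * ξ k) := by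
      have h2 : (∑ j, (2 / ‖ξ‖ ^ 2) * ξ j * ((2 / ‖ξ‖ ^ 2) * (ξ j * ξ k)))
          = (2 / ‖ξ‖ ^ 2) * (2 / ‖ξ‖ ^ 2) * ξ k * (∑ j, ξ j * ξ j) := by
        rw [Finset.mul_sum]
        exact Finset.sum_congr rfl fun j _ => by ring
      rw [h2, sum_sq ξ hξ]
      field_simp
    rw [hr]
    push_cast
    ring
  simp only [hcoe]
  have hB : (∑ x, (2 * (((2 / ‖ξ‖ ^ 2) * ξ x : ℝ) : ℂ)) • (X x : MvPolynomial (Fin n) ℂ))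
      = (2:ℂ) • ∑ x, (((2 / ‖ξ‖ ^ 2) * ξ x : ℝ) : ℂ) • (X x : MvPolynomial (Fin n) ℂ) := by
    rw [Finset.smul_sum]
    exact Finset.sum_congr rfl fun x _ => by rw [smul_smul]
  rw [hB]
  module

lemma P_ne_zero (hξ : ξ ≠ 0) :
    (∑ j, (((2 / ‖ξ‖ ^ 2) * ξ j : ℝ) : ℂ) • (X j : MvPolynomial (Fin n) ℂ)) ≠ 0 := by
  classical
  have hN : (‖ξ‖ : ℝ) ^ 2 ≠ 0 := pow_ne_zero _ (norm_ne_zero_iff.2 hξ)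
  obtain ⟨j₀, hj₀⟩ : ∃ j, ξ j ≠ 0 := by
    by_contra hcon
    push_neg at hcon
    exact hξ (by ext j; simpa using hcon j)
  intro hP0
  have hco := congrArg (MvPolynomial.coeff (Finsupp.single j₀ 1)) hP0
  rw [MvPolynomial.coeff_sum] at hco
  simp only [MvPolynomial.coeff_smul, MvPolynomial.coeff_X', smul_eq_mul] at hco
  rw [Finset.sum_eq_single j₀ (fun b _ hb => by
      have hcond : ¬(Finsupp.single b (1:ℕ) = Finsupp.single j₀ 1) :=
        fun hc => hb ((Finsupp.single_left_inj one_ne_zero).1 hc)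
      simp [hcond]) (fun habs => absurd (Finset.mem_univ j₀) habs)] at hco
  simp only [if_true, mul_one, MvPolynomial.coeff_zero, Complex.ofReal_eq_zero] at hco
  have h2N : (2 / ‖ξ‖ ^ 2 : ℝ) ≠ 0 := div_ne_zero two_ne_zero hN
  exact hj₀ (by
    rcases mul_eq_zero.1 hco with h | h
    · exact absurd h h2N
    · exact h)

lemma sigma_fix (hξ : ξ ≠ 0)
    (σ : MvPolynomial (Fin n) ℂ →ₐ[ℂ] MvPolynomial (Fin n) ℂ)
    (hσ : ∀ i, σ (X i) =
      X i - ∑ j, (((2 / ‖ξ‖ ^ 2) * (ξ i * ξ j) : ℝ) : ℂ) • X j)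
    (p q : MvPolynomial (Fin n) ℂ)
    (hq : (∑ j, (((2 / ‖ξ‖ ^ 2) * ξ j : ℝ) : ℂ) • X j) * q = σ p - p) :
    σ q = q := by
  have h1 := congrArg σ hq
  rw [map_mul, map_sub, sigma_sq ξ hξ σ hσ p, sigma_P ξ hξ σ hσ, neg_mul] at h1
  have h3 : (∑ j, (((2 / ‖ξ‖ ^ 2) * ξ j : ℝ) : ℂ) • X j) * σ q
      = (∑ j, (((2 / ‖ξ‖ ^ 2) * ξ j : ℝ) : ℂ) • X j) * q := by
    rw [hq]
    linear_combination -h1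
  exact mul_left_cancel₀ (P_ne_zero ξ hξ) h3

end Algebra2

noncomputable section FTCLayer

variable {n : ℕ} (ξ : EuclideanSpace ℝ (Fin n))

lemma Iop_fderiv_uu (hξ : ξ ≠ 0) (ψ : EuclideanSpace ℝ (Fin n) → ℂ) (hψ : Sm ψ)
    (v : EuclideanSpace ℝ (Fin n)) :
    fderiv ℝ (Iop ξ ψ) v (uu ξ) = ψ (Sf ξ v) + ψ v := by
  have hψ1 : ContDiff ℝ 1 ψ := hψ.contDiff1
  have hdc : Continuous (fderiv ℝ ψ) := hψ1.continuous_fderiv one_ne_zero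
  have hIntD : IntervalIntegrable (fun t => fderiv ℝ ψ (v - t • uu ξ))
      MeasureTheory.volume 0 (⟪ξ, v⟫) :=
    (hdc.comp (continuous_const.sub (continuous_id.smul
      continuous_const))).intervalIntegrable _ _
  rw [(hasFDerivAt_Iop ξ ψ hψ1 v).fderiv, ContinuousLinearMap.add_apply,
    ContinuousLinearMap.intervalIntegral_apply hIntD,
    ContinuousLinearMap.smulRight_apply, innerSL_apply_apply, inner_uu hξ]
  have hder : ∀ t ∈ uIcc (0:ℝ) (⟪ξ, v⟫),
      HasDerivAt (fun s => ψ (v - s • uu ξ)) (-(fderiv ℝ ψ (v - t • uu ξ) (uu ξ))) t := by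
    intro t _
    have hγ : HasDerivAt (fun s : ℝ => v - s • uu ξ) (-(uu ξ)) t := by
      have h1 : HasDerivAt (fun s : ℝ => s • uu ξ) (uu ξ) t := by
        simpa using (hasDerivAt_id t).smul_const (uu ξ)
      simpa using h1.const_sub v
    have hd := ((hψ1.differentiable one_ne_zero (v - t • uu ξ)).hasFDerivAt).comp_hasDerivAt t hγ
    simpa [map_neg, Function.comp_def] using hd
  have hFTC := intervalIntegral.integral_eq_sub_of_hasDerivAt hder
    (((hdc.comp (continuous_const.sub (continuous_id.smul continuous_const))).clm_apply
      continuous_const).neg.intervalIntegrable _ _)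
  rw [intervalIntegral.integral_neg] at hFTC
  have hI : (∫ t in (0:ℝ)..(⟪ξ, v⟫), fderiv ℝ ψ (v - t • uu ξ) (uu ξ))
      = ψ v - ψ (Sf ξ v) := by
    have := neg_eq_iff_eq_neg.1 hFTC
    rw [this]
    simp [Sf]
  rw [hI, Complex.real_smul]
  push_cast
  ring

end FTCLayer


/-- Gutkin's adjointness: the divided difference operator `Δ_ξ` is adjoint to
`-I(ξ)` with respect to the pairing `(p, f) = (p(∂)f)(0)`.

Work on `V = EuclideanSpace ℝ (Fin n)`, identifying `S(V_ℂ)` with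
`MvPolynomial (Fin n) ℂ` (the variable `X i` corresponding to the basis vector
`e i ∈ V`). The pairing `pair p f = (p(∂)f)(0)` is characterized by the listed
hypotheses (linearity in `p`, `pair 1 f = f 0`, and
`pair (X i · p) f = pair p (∂_i f)`). For `ξ ≠ 0`, `ξ^∨ = (2/‖ξ‖²)·ξ`; the
reflection `s_ξ` acts on polynomials by the algebra map `σ` with
`σ(X i) = X i - ξ(e i)·(ξ^∨ as polynomial)`, and `Δ_ξ(p)` is the polynomial `q`
with `(ξ^∨)·q = σ(p) - p`. Then for real-analytic `f`,
`(Δ_ξ(p), f) = -(p, I(ξ)f)` where `(I(ξ)f)(v) = ∫_0^{⟨ξ,v⟩} f(v - t·ξ^∨) dt`. -/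
theorem divided_difference_adjoint_integral {n : ℕ}
    (pair : MvPolynomial (Fin n) ℂ → (EuclideanSpace ℝ (Fin n) → ℂ) → ℂ)
    (hpair_one : ∀ f, pair 1 f = f 0)
    (hpair_add : ∀ p q f, pair (p + q) f = pair p f + pair q f)
    (hpair_smul : ∀ (c : ℂ) (p) (f), pair (c • p) f = c * pair p f)
    (hpair_X : ∀ (i : Fin n) (p) (f : EuclideanSpace ℝ (Fin n) → ℂ),
      pair (X i * p) f =
        pair p (fun x => fderiv ℝ f x (EuclideanSpace.single i 1)))
    (ξ : EuclideanSpace ℝ (Fin n)) (hξ : ξ ≠ 0)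
    (f : EuclideanSpace ℝ (Fin n) → ℂ) (hf : ∀ x, AnalyticAt ℝ f x)
    (σ : MvPolynomial (Fin n) ℂ →ₐ[ℂ] MvPolynomial (Fin n) ℂ)
    (hσ : ∀ i, σ (X i) =
      X i - ∑ j, (((2 / ‖ξ‖ ^ 2) * (ξ i * ξ j) : ℝ) : ℂ) • X j)
    (p q : MvPolynomial (Fin n) ℂ)
    (hq : (∑ j, (((2 / ‖ξ‖ ^ 2) * ξ j : ℝ) : ℂ) • X j) * q = σ p - p) :
    pair q f =
      - pair p (fun v => ∫ t in (0 : ℝ)..((inner ℝ ξ v : ℝ)),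
          f (v - t • ((2 / ‖ξ‖ ^ 2) • ξ))) := by
  classical
  have hSm : Sm f := fun k => contDiff_iff_contDiffAt.2 fun x => (hf x).contDiffAt
  have hGoodf : Good ξ f := Good.ofSm hSm
  have hGoodg : Good ξ (Iop ξ f) :=
    ⟨fun _ => 0, f, Sm.zero, hSm, fun v => by rw [zero_add]⟩
  have hσq : σ q = q := sigma_fix ξ hξ σ hσ p q hq
  have hstep1 : pair ((∑ j, (((2 / ‖ξ‖ ^ 2) * ξ j : ℝ) : ℂ) • X j) * q) (Iop ξ f)
      = pair q (fun v => fderiv ℝ (Iop ξ f) v (uu ξ)) := by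
    rw [Finset.sum_mul, pair_sum_left pair hpair_add hpair_smul]
    have h1 : ∀ j, pair ((((2 / ‖ξ‖ ^ 2) * ξ j : ℝ) : ℂ) • X j * q) (Iop ξ f)
        = (((2 / ‖ξ‖ ^ 2) * ξ j : ℝ) : ℂ)
          * pair q (fun v => fderiv ℝ (Iop ξ f) v (EuclideanSpace.single j 1)) := fun j => by
      rw [smul_mul_assoc, hpair_smul, hpair_X]
    simp only [h1]
    rw [← pair_good_sum pair ξ hpair_one hpair_add hpair_smul hpair_X q Finset.univ
      (fun j => (((2 / ‖ξ‖ ^ 2) * ξ j : ℝ) : ℂ))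
      (fun j => fun v => fderiv ℝ (Iop ξ f) v (EuclideanSpace.single j 1))
      (fun j _ => hGoodg.deriv j)]
    congr 1
    funext v
    rw [fderiv_apply_uu]
  have hstep2 : (fun v => fderiv ℝ (Iop ξ f) v (uu ξ))
      = fun v => f (Sf ξ v) + f v := by
    funext v
    exact Iop_fderiv_uu ξ hξ f hSm v
  have hL : pair ((∑ j, (((2 / ‖ξ‖ ^ 2) * ξ j : ℝ) : ℂ) • X j) * q) (Iop ξ f)
      = 2 * pair q f := by
    rw [hstep1, hstep2,
      pair_good_add pair ξ hpair_one hpair_add hpair_smul hpair_X q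
        (hGoodf.compSf hξ) hGoodf]
    have hsig := pair_sigma pair ξ hpair_one hpair_add hpair_smul hpair_X hξ σ hσ q hGoodf
    rw [← hsig, hσq]
    ring
  have hR : pair ((∑ j, (((2 / ‖ξ‖ ^ 2) * ξ j : ℝ) : ℂ) • X j) * q) (Iop ξ f)
      = -2 * pair p (Iop ξ f) := by
    rw [hq, pair_sub pair hpair_add hpair_smul,
      pair_sigma pair ξ hpair_one hpair_add hpair_smul hpair_X hξ σ hσ p hGoodg]
    have h3 : (fun v => Iop ξ f (Sf ξ v)) = fun v => (-1:ℂ) * Iop ξ f v := by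
      funext v
      rw [Iop_compSf hξ]
      ring
    rw [h3, pair_good_cmul pair ξ hpair_one hpair_add hpair_smul hpair_X p (-1) hGoodg]
    ring
  have h4 : (2:ℂ) * pair q f = 2 * (- pair p (Iop ξ f)) := by
    rw [← hL, hR]; ring
  have h5 : pair q f = - pair p (Iop ξ f) := mul_left_cancel₀ two_ne_zero h4
  exact h5
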